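/- arXiv:2103.10622 — 2 statements merged into one kernel-verified Lean document; each statement's English description precedes it below -/
import Mathlib

section
/- For positive integers r, p, m with m ≥ r+1, the Euler sum of generalized hyperharmonic numbers satisfies ζ_{H^{(p,r)}}(m) := ∑_{n=1}^∞ H_n^{(p,r)}/n^m = ∑_{ℓ=0}^{r−1} ∑_{j=0}^{r−1−ℓ} a(r,ℓ,j)·S^{+,+}_{p−ℓ, m−j}, where S^{+,+}_{q,s} := ∑_{n=1}^∞ H_n^{(q)}/n^s. -/
/-- The nested sum `T(r,n,t)`: `T(1,n,t) = 1`, `T(r+1,n,t) = ∑_{k=t}^n T(r,k,t)`.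
    (`Tsum 0` is an unused dummy value.) -/
def Tsum : ℕ → ℕ → ℕ → ℚ
  | 0, _, _ => 0
  | 1, _, _ => 1
  | r + 2, n, t => ∑ k ∈ Finset.Icc t n, Tsum (r + 1) k t

/-- Generalized harmonic numbers with integer exponent:
    `Hz q n = ∑_{x=1}^n x^{-q}` (for `q ≤ 0` this is `∑_{x=1}^n x^{|q|}`). -/
def Hz (q : ℤ) (n : ℕ) : ℚ := ∑ x ∈ Finset.Icc 1 n, (x : ℚ) ^ (-q)

/-- Generalized hyperharmonic numbers: `Hpr p 1 n = H_n^{(p)} = ∑_{j=1}^n 1/j^p`,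
    `Hpr p (r+1) n = ∑_{j=1}^n Hpr p r j`. (`Hpr p 0` is an unused dummy value.) -/
def Hpr : ℕ → ℕ → ℕ → ℚ
  | _, 0, _ => 0
  | p, 1, n => ∑ j ∈ Finset.Icc 1 n, (1 : ℚ) / (j : ℚ) ^ p
  | p, r + 2, n => ∑ j ∈ Finset.Icc 1 n, Hpr p (r + 1) j

/-- The classical linear Euler sum `S^{+,+}_{q,s} = ∑_{n=1}^∞ H_n^{(q)}/n^s`. -/
noncomputable def S (q : ℤ) (s : ℕ) : ℝ :=
  ∑' n : ℕ, ((Hz q (n + 1) : ℚ) : ℝ) / (n + 1 : ℝ) ^ s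

/-- The Euler sum of generalized hyperharmonic numbers
    `ζ_{H^{(p,r)}}(m) = ∑_{n=1}^∞ H_n^{(p,r)}/n^m`. -/
noncomputable def zetaHpr (p r m : ℕ) : ℝ :=
  ∑' n : ℕ, ((Hpr p r (n + 1) : ℚ) : ℝ) / (n + 1 : ℝ) ^ m

/-! ### Auxiliary lemmas -/

lemma sum_inv_le_two_sqrt (n : ℕ) :
    ∑ x ∈ Finset.Icc 1 n, (1 : ℝ) / x ≤ 2 * Real.sqrt n := by
  induction n with
  | zero => simp
  | succ n ih =>
    rw [Finset.sum_Icc_succ_top (by omega)]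
    have hs : Real.sqrt n ≥ 0 := Real.sqrt_nonneg _
    have ht0 : Real.sqrt ((n:ℕ)+1) ≥ 0 := Real.sqrt_nonneg _
    have hs2 : Real.sqrt n ^ 2 = n := Real.sq_sqrt (by positivity)
    have ht2 : Real.sqrt ((n:ℕ)+1) ^ 2 = ((n:ℕ):ℝ)+1 := by
      exact Real.sq_sqrt (by positivity)
    have ht : Real.sqrt ((n:ℕ)+1) ≥ 1 := by nlinarith
    have key : (1:ℝ)/(((n:ℕ):ℝ)+1) ≤ 2 * Real.sqrt (n+1) - 2 * Real.sqrt n := by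
      rw [div_le_iff₀ (by positivity)]
      set s := Real.sqrt n
      set t := Real.sqrt ((n:ℕ)+1)
      have hst : s ≤ t := Real.sqrt_le_sqrt (by push_cast; linarith)
      nlinarith [sq_nonneg (t - s), sq_nonneg (t + s)]
    push_cast
    push_cast at key
    linarith

lemma Hz_cast (q : ℤ) (n : ℕ) :
    ((Hz q n : ℚ) : ℝ) = ∑ x ∈ Finset.Icc 1 n, (x : ℝ) ^ (-q) := by
  unfold Hz; push_cast; rfl

lemma Hz_nonneg (q : ℤ) (n : ℕ) : (0:ℝ) ≤ ((Hz q n : ℚ) : ℝ) := by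
  rw [Hz_cast]
  apply Finset.sum_nonneg
  intro x hx
  have : (0:ℝ) < x := by
    have := (Finset.mem_Icc.mp hx).1; positivity
  positivity

lemma Hz_le (p ℓ : ℕ) (hp : 1 ≤ p) (n : ℕ) :
    ((Hz ((p:ℤ) - ℓ) n : ℚ) : ℝ) ≤ (n:ℝ) ^ ℓ * (2 * Real.sqrt n) := by
  rw [Hz_cast]
  calc ∑ x ∈ Finset.Icc 1 n, (x:ℝ) ^ (-((p:ℤ) - ℓ))
      ≤ ∑ x ∈ Finset.Icc 1 n, (n:ℝ) ^ ℓ * (1 / x) := by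
        apply Finset.sum_le_sum
        intro x hx
        obtain ⟨hx1, hxn⟩ := Finset.mem_Icc.mp hx
        have h1x : (1:ℝ) ≤ x := by exact_mod_cast hx1
        have hxr : (x:ℝ) ≤ n := by exact_mod_cast hxn
        have : (x:ℝ) ^ (-((p:ℤ) - ℓ)) = (x:ℝ) ^ (ℓ:ℤ) * (x:ℝ) ^ (-(p:ℤ)) := by
          rw [← zpow_add₀ (by linarith : (x:ℝ) ≠ 0)]; ring_nf
        rw [this]
        have h2 : (x:ℝ) ^ (-(p:ℤ)) ≤ (x:ℝ) ^ (-(1:ℤ)) :=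
          zpow_le_zpow_right₀ h1x (by omega)
        have h3 : (x:ℝ) ^ (ℓ:ℤ) ≤ (n:ℝ) ^ (ℓ:ℤ) := by
          rw [zpow_natCast, zpow_natCast]
          exact pow_le_pow_left₀ (by linarith) hxr ℓ
        have h4 : (0:ℝ) < (x:ℝ) ^ (-(p:ℤ)) := by positivity
        have h5 : (0:ℝ) ≤ (x:ℝ) ^ (ℓ:ℤ) := by positivity
        calc (x:ℝ) ^ (ℓ:ℤ) * (x:ℝ) ^ (-(p:ℤ)) ≤ (n:ℝ) ^ (ℓ:ℤ) * (x:ℝ) ^ (-(1:ℤ)) := by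
              apply mul_le_mul h3 h2 (le_of_lt h4) (by positivity)
          _ = (n:ℝ) ^ ℓ * (1 / x) := by
              rw [zpow_neg, zpow_one, zpow_natCast]; ring
    _ = (n:ℝ) ^ ℓ * ∑ x ∈ Finset.Icc 1 n, (1:ℝ)/x := by rw [Finset.mul_sum]
    _ ≤ (n:ℝ) ^ ℓ * (2 * Real.sqrt n) := by
        apply mul_le_mul_of_nonneg_left (sum_inv_le_two_sqrt n) (by positivity)

lemma summable_term (p ℓ m j : ℕ) (hp : 1 ≤ p) (hlj : ℓ + j + 2 ≤ m) :
    Summable (fun n : ℕ => ((Hz ((p:ℤ) - ℓ) (n+1) : ℚ) : ℝ) / ((n:ℝ)+1) ^ (m - j)) := by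
  have hmaj : Summable (fun n : ℕ => 2 * ((n:ℝ)+1) ^ (-(3/2) : ℝ)) := by
    apply Summable.mul_left
    have : Summable (fun n : ℕ => ((n:ℝ)) ^ (-(3/2) : ℝ)) :=
      Real.summable_nat_rpow.mpr (by norm_num)
    have := (summable_nat_add_iff 1).mpr this
    convert this using 2 with n
    · rfl
    · push_cast; ring_nf
  apply Summable.of_nonneg_of_le _ _ hmaj
  · intro n
    have h0 : (0:ℝ) < (n:ℝ)+1 := by positivity
    exact div_nonneg (Hz_nonneg _ _) (by positivity)
  · intro n
    have h0 : (0:ℝ) < (n:ℝ)+1 := by positivity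
    have h1 : (1:ℝ) ≤ (n:ℝ)+1 := by linarith
    have hb := Hz_le p ℓ hp (n+1)
    have hcast : ((n+1:ℕ):ℝ) = (n:ℝ)+1 := by push_cast; ring
    rw [hcast] at hb
    have hpow : ((n:ℝ)+1) ^ (ℓ+2) ≤ ((n:ℝ)+1) ^ (m-j) := by
      apply pow_le_pow_right₀ h1 (by omega)
    have hnum : (0:ℝ) ≤ ((Hz ((p:ℤ) - ℓ) (n+1) : ℚ) : ℝ) := Hz_nonneg _ _
    calc ((Hz ((p:ℤ) - ℓ) (n+1) : ℚ) : ℝ) / ((n:ℝ)+1) ^ (m - j)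
        ≤ (((n:ℝ)+1) ^ ℓ * (2 * Real.sqrt ((n:ℝ)+1))) / ((n:ℝ)+1) ^ (ℓ+2) := by
          apply div_le_div₀ (by positivity) hb (by positivity) hpow
      _ = 2 * (Real.sqrt ((n:ℝ)+1) / ((n:ℝ)+1)^2) := by
          rw [pow_add]
          have : ((n:ℝ)+1) ^ ℓ ≠ 0 := by positivity
          field_simp
      _ = 2 * ((n:ℝ)+1) ^ (-(3/2) : ℝ) := by
          rw [Real.sqrt_eq_rpow, ← Real.rpow_natCast ((n:ℝ)+1) 2, ← Real.rpow_sub h0]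
          norm_num

lemma Hpr_eq_sum_Tsum (p : ℕ) (r : ℕ) (hr : 1 ≤ r) (n : ℕ) :
    Hpr p r n = ∑ t ∈ Finset.Icc 1 n, Tsum r n t / (t : ℚ) ^ p := by
  induction r, hr using Nat.le_induction generalizing n with
  | base =>
    show Hpr p 1 n = _
    simp [Hpr, Tsum]
  | succ r hr ih =>
    obtain ⟨k, rfl⟩ : ∃ k, r = k + 1 := ⟨r - 1, by omega⟩
    show Hpr p (k+2) n = ∑ t ∈ Finset.Icc 1 n, Tsum (k+2) n t / (t:ℚ)^p
    show (∑ j ∈ Finset.Icc 1 n, Hpr p (k+1) j) = _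
    have : ∀ j ∈ Finset.Icc 1 n, Hpr p (k+1) j
        = ∑ t ∈ Finset.Icc 1 j, Tsum (k+1) j t / (t:ℚ)^p := fun j _ => ih j
    rw [Finset.sum_congr rfl this]
    rw [Finset.sum_comm' (s' := fun t => Finset.Icc t n) (t' := Finset.Icc 1 n)
      (by intro x y; simp only [Finset.mem_Icc]; omega)]
    apply Finset.sum_congr rfl
    intro t ht
    show _ = (∑ k' ∈ Finset.Icc t n, Tsum (k+1) k' t) / (t:ℚ)^p
    rw [Finset.sum_div]

lemma Hpr_eq_poly (a : ℕ → ℕ → ℕ → ℚ)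
    (ha : ∀ r, 1 ≤ r → ∀ t n : ℕ, 1 ≤ t → t ≤ n →
      Tsum r n t = ∑ ℓ ∈ Finset.range r, ∑ j ∈ Finset.range (r - ℓ),
        a r ℓ j * (n : ℚ) ^ j * (t : ℚ) ^ ℓ)
    (r p : ℕ) (hr : 1 ≤ r) (n : ℕ) :
    Hpr p r n = ∑ ℓ ∈ Finset.range r, ∑ j ∈ Finset.range (r - ℓ),
      a r ℓ j * (n : ℚ) ^ j * Hz ((p:ℤ) - ℓ) n := by
  rw [Hpr_eq_sum_Tsum p r hr n]
  have step1 : ∀ t ∈ Finset.Icc 1 n, Tsum r n t / (t:ℚ)^p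
      = ∑ ℓ ∈ Finset.range r, ∑ j ∈ Finset.range (r - ℓ),
        a r ℓ j * (n:ℚ)^j * (t:ℚ) ^ (-(((p:ℤ) - ℓ))) := by
    intro t ht
    obtain ⟨ht1, htn⟩ := Finset.mem_Icc.mp ht
    rw [ha r hr t n ht1 htn, Finset.sum_div]
    apply Finset.sum_congr rfl
    intro ℓ _
    rw [Finset.sum_div]
    apply Finset.sum_congr rfl
    intro j _
    have htq : (t:ℚ) ≠ 0 := by
      have : (0:ℚ) < t := by exact_mod_cast ht1
      linarith
    rw [mul_div_assoc]
    congr 1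
    rw [neg_sub, zpow_sub₀ htq, zpow_natCast, zpow_natCast]
  rw [Finset.sum_congr rfl step1]
  rw [Finset.sum_comm]
  apply Finset.sum_congr rfl
  intro ℓ _
  rw [Finset.sum_comm]
  apply Finset.sum_congr rfl
  intro j _
  rw [← Finset.mul_sum]
  rfl

theorem main_theorem (a : ℕ → ℕ → ℕ → ℚ)
    (ha : ∀ r, 1 ≤ r → ∀ t n : ℕ, 1 ≤ t → t ≤ n →
      Tsum r n t = ∑ ℓ ∈ Finset.range r, ∑ j ∈ Finset.range (r - ℓ),
        a r ℓ j * (n : ℚ) ^ j * (t : ℚ) ^ ℓ)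
    (r p m : ℕ) (hr : 1 ≤ r) (hp : 1 ≤ p) (hm : r + 1 ≤ m) :
    zetaHpr p r m = ∑ ℓ ∈ Finset.range r, ∑ j ∈ Finset.range (r - ℓ),
      (a r ℓ j : ℝ) * S ((p : ℤ) - ℓ) (m - j) := by
  have hlj : ∀ ℓ ∈ Finset.range r, ∀ j ∈ Finset.range (r - ℓ), ℓ + j + 2 ≤ m := by
    intro ℓ hℓ j hj
    simp only [Finset.mem_range] at hℓ hj
    omega
  -- pointwise identity
  have pointwise : ∀ n : ℕ,
      ((Hpr p r (n+1) : ℚ) : ℝ) / ((n:ℝ) + 1) ^ m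
      = ∑ ℓ ∈ Finset.range r, ∑ j ∈ Finset.range (r - ℓ),
          (a r ℓ j : ℝ) * (((Hz ((p:ℤ) - ℓ) (n+1) : ℚ) : ℝ) / ((n:ℝ)+1) ^ (m - j)) := by
    intro n
    have key := Hpr_eq_poly a ha r p hr (n+1)
    have hkey : ((Hpr p r (n+1) : ℚ) : ℝ)
        = ∑ ℓ ∈ Finset.range r, ∑ j ∈ Finset.range (r - ℓ),
            (a r ℓ j : ℝ) * ((n:ℝ)+1) ^ j * ((Hz ((p:ℤ) - ℓ) (n+1) : ℚ) : ℝ) := by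
      rw [key]
      push_cast
      refine Finset.sum_congr rfl fun ℓ _ => Finset.sum_congr rfl fun j _ => ?_
      ring
    rw [hkey, Finset.sum_div]
    apply Finset.sum_congr rfl
    intro ℓ hℓ
    rw [Finset.sum_div]
    apply Finset.sum_congr rfl
    intro j hj
    have hm' : m - j + j = m := by
      have := hlj ℓ hℓ j hj; omega
    have h0 : (0:ℝ) < (n:ℝ)+1 := by positivity
    have hsplit : ((n:ℝ)+1) ^ m = ((n:ℝ)+1) ^ (m-j) * ((n:ℝ)+1) ^ j := by
      rw [← pow_add, hm']
    rw [hsplit]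
    have h1 : ((n:ℝ)+1) ^ (m-j) ≠ 0 := by positivity
    have h2 : ((n:ℝ)+1) ^ j ≠ 0 := by positivity
    field_simp
  have hsummable : ∀ ℓ ∈ Finset.range r, ∀ j ∈ Finset.range (r - ℓ),
      Summable (fun n : ℕ =>
        (a r ℓ j : ℝ) * (((Hz ((p:ℤ) - ℓ) (n+1) : ℚ) : ℝ) / ((n:ℝ)+1) ^ (m - j))) := by
    intro ℓ hℓ j hj
    exact Summable.mul_left _ (summable_term p ℓ m j hp (hlj ℓ hℓ j hj))
  calc zetaHpr p r m
      = ∑' n : ℕ, ∑ ℓ ∈ Finset.range r, ∑ j ∈ Finset.range (r - ℓ),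
          (a r ℓ j : ℝ) * (((Hz ((p:ℤ) - ℓ) (n+1) : ℚ) : ℝ) / ((n:ℝ)+1) ^ (m - j)) := by
        unfold zetaHpr
        exact tsum_congr pointwise
    _ = ∑ ℓ ∈ Finset.range r, ∑' n : ℕ, ∑ j ∈ Finset.range (r - ℓ),
          (a r ℓ j : ℝ) * (((Hz ((p:ℤ) - ℓ) (n+1) : ℚ) : ℝ) / ((n:ℝ)+1) ^ (m - j)) := by
        apply Summable.tsum_finsetSum
        intro ℓ hℓ
        exact summable_sum (fun j hj => hsummable ℓ hℓ j hj)
    _ = ∑ ℓ ∈ Finset.range r, ∑ j ∈ Finset.range (r - ℓ),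
          (a r ℓ j : ℝ) * S ((p : ℤ) - ℓ) (m - j) := by
        apply Finset.sum_congr rfl
        intro ℓ hℓ
        rw [Summable.tsum_finsetSum (fun j hj => hsummable ℓ hℓ j hj)]
        apply Finset.sum_congr rfl
        intro j hj
        rw [tsum_mul_left]
        rfl
end

section
/- The coefficients a(r,m,ℓ) satisfy, for r ≥ 1: a(r+1,r,0) = −∑_{m=0}^{r−1} a(r,m,r−m−1)/(r−m). -/
open Polynomial Finset

lemma zero_of_eval_nat (p : ℚ[X]) (N : ℕ) (h : ∀ n : ℕ, N ≤ n → p.eval (n:ℚ) = 0) : p = 0 := by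
  apply Polynomial.eq_zero_of_infinite_isRoot
  apply Set.Infinite.mono (s := (fun n : ℕ => (n:ℚ)) '' Set.Ici N)
  · rintro x ⟨n, hn, rfl⟩; exact h n hn
  · exact (Set.Ici_infinite N).image (fun a _ b _ hab => Nat.cast_injective hab)

lemma coeffs_zero (M N : ℕ) (c : ℕ → ℚ)
    (h : ∀ t : ℕ, N ≤ t → ∑ m ∈ Finset.range M, c m * (t:ℚ)^m = 0) :
    ∀ m, m < M → c m = 0 := by
  intro m hm
  have hp : (∑ m ∈ Finset.range M, C (c m) * X^m : ℚ[X]) = 0 := by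
    apply zero_of_eval_nat _ N
    intro n hn
    simp only [Polynomial.eval_finset_sum, Polynomial.eval_mul, Polynomial.eval_C,
      Polynomial.eval_pow, Polynomial.eval_X]
    exact h n hn
  have h2 := congrArg (fun p => Polynomial.coeff p m) hp
  simp only [Polynomial.finset_sum_coeff, Polynomial.coeff_C_mul, Polynomial.coeff_X_pow,
    Polynomial.coeff_zero, mul_ite, mul_one, mul_zero] at h2
  rwa [Finset.sum_ite_eq (Finset.range M) m c, if_pos (Finset.mem_range.2 hm)] at h2

lemma Tsum_succ (r : ℕ) (hr : 1 ≤ r) (n t : ℕ) :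
    Tsum (r+1) n t = ∑ k ∈ Finset.Icc t n, Tsum r k t := by
  rcases r with _ | s
  · omega
  · rfl

lemma Tsum_step (r : ℕ) (hr : 1 ≤ r) (t n : ℕ) (h : t ≤ n) :
    Tsum (r+1) (n+1) t = Tsum (r+1) n t + Tsum r (n+1) t := by
  rw [Tsum_succ r hr, Tsum_succ r hr, Finset.sum_Icc_succ_top (le_trans h (Nat.le_succ n))]

lemma Tsum_diag (r : ℕ) (hr : 1 ≤ r) (t : ℕ) :
    Tsum (r+1) t t = Tsum r t t := by
  rw [Tsum_succ r hr, Finset.Icc_self, Finset.sum_singleton]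

theorem a_recurrence_top (a : ℕ → ℕ → ℕ → ℚ)
    (ha : ∀ r, 1 ≤ r → ∀ t n : ℕ, 1 ≤ t → t ≤ n →
      Tsum r n t = ∑ m ∈ Finset.range r, ∑ ℓ ∈ Finset.range (r - m),
        a r m ℓ * (n : ℚ) ^ ℓ * (t : ℚ) ^ m)
    (ha1 : a 1 0 0 = 1)
    (r : ℕ) (hr : 1 ≤ r) :
    a (r + 1) r 0 = -∑ m ∈ Finset.range r, a r m (r - m - 1) / ((r : ℚ) - m) := by
  have hB := ha (r+1) (by omega)
  have hA := ha r hr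
  -- Step 1: the "difference in n" value identity
  have L2 : ∀ t n : ℕ, 1 ≤ t → t ≤ n →
      ∑ m ∈ Finset.range (r+1), ∑ ℓ ∈ Finset.range (r+1-m),
        a (r+1) m ℓ * (t:ℚ)^m * (((n:ℚ)+1)^ℓ - (n:ℚ)^ℓ)
      - ∑ m ∈ Finset.range r, ∑ ℓ ∈ Finset.range (r-m),
        a r m ℓ * (t:ℚ)^m * ((n:ℚ)+1)^ℓ = 0 := by
    intro t n ht htn
    have e1 := hB t n ht htn
    have e2 := hB t (n+1) ht (by omega)
    have e3 := hA t (n+1) ht (by omega)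
    have estep := Tsum_step r hr t n htn
    rw [e1, e2, e3] at estep
    push_cast at estep
    have expand : ∀ (b : ℕ → ℕ → ℚ) (M : ℕ) (f : ℕ → ℕ),
        ∑ m ∈ Finset.range M, ∑ ℓ ∈ Finset.range (f m),
          b m ℓ * (t:ℚ)^m * (((n:ℚ)+1)^ℓ - (n:ℚ)^ℓ)
        = ∑ m ∈ Finset.range M, ∑ ℓ ∈ Finset.range (f m),
            b m ℓ * ((n:ℚ)+1)^ℓ * (t:ℚ)^m
          - ∑ m ∈ Finset.range M, ∑ ℓ ∈ Finset.range (f m),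
            b m ℓ * (n:ℚ)^ℓ * (t:ℚ)^m := by
      intro b M f
      rw [← Finset.sum_sub_distrib]
      refine Finset.sum_congr rfl fun m _ => ?_
      rw [← Finset.sum_sub_distrib]
      refine Finset.sum_congr rfl fun ℓ _ => ?_
      ring
    rw [expand]
    have expand2 : ∑ m ∈ Finset.range r, ∑ ℓ ∈ Finset.range (r-m),
        a r m ℓ * (t:ℚ)^m * ((n:ℚ)+1)^ℓ
        = ∑ m ∈ Finset.range r, ∑ ℓ ∈ Finset.range (r-m),
          a r m ℓ * ((n:ℚ)+1)^ℓ * (t:ℚ)^m := by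
      refine Finset.sum_congr rfl fun m _ => Finset.sum_congr rfl fun ℓ _ => by ring
    rw [expand2]
    linarith [estep]
  -- Step 2: key coefficient relation
  have key : ∀ m₀, m₀ < r →
      a (r+1) m₀ (r-m₀) * ((r:ℚ) - (m₀:ℚ)) = a r m₀ (r-m₀-1) := by
    intro m₀ hm₀
    set j := r - m₀ - 1 with hj
    have hc := coeffs_zero (r+1) 1
      (fun m => (∑ ℓ ∈ Finset.range (r+1-m),
          a (r+1) m ℓ * ((ℓ.choose j : ℚ) - if j = ℓ then 1 else 0))
        - (if m < r then ∑ ℓ ∈ Finset.range (r-m), a r m ℓ * (ℓ.choose j : ℚ) else 0))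
      ?_ m₀ (by omega)
    · -- unpack hc
      beta_reduce at hc
      rw [if_pos hm₀] at hc
      have hcast : ((j:ℚ) + 1) = (r:ℚ) - (m₀:ℚ) := by
        have h1 : (j + 1 : ℕ) = r - m₀ := by omega
        have h2 : ((r - m₀ : ℕ) : ℚ) = (r:ℚ) - (m₀:ℚ) := by
          push_cast [Nat.cast_sub hm₀.le]; ring
        rw [← h2, ← h1]; push_cast; ring
      have hsum1 : ∑ ℓ ∈ Finset.range (r+1-m₀),
          a (r+1) m₀ ℓ * ((ℓ.choose j : ℚ) - if j = ℓ then 1 else 0)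
          = a (r+1) m₀ (r-m₀) * ((r:ℚ) - (m₀:ℚ)) := by
        have hrm : r + 1 - m₀ = (r - m₀) + 1 := by omega
        rw [hrm, Finset.sum_range_succ]
        have hz : ∑ ℓ ∈ Finset.range (r-m₀),
            a (r+1) m₀ ℓ * ((ℓ.choose j : ℚ) - if j = ℓ then 1 else 0) = 0 := by
          refine Finset.sum_eq_zero fun ℓ hℓ => ?_
          rw [Finset.mem_range] at hℓ
          rcases eq_or_lt_of_le (Nat.lt_succ_iff.mp (by omega : ℓ < j + 1)) with h | h
          · rw [h, if_pos rfl, Nat.choose_self]; norm_num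
          · rw [if_neg (by omega), Nat.choose_eq_zero_of_lt h]; norm_num
        rw [hz, zero_add]
        have h1 : r - m₀ = j + 1 := by omega
        rw [h1, Nat.choose_succ_self_right, if_neg (by omega)]
        push_cast
        rw [sub_zero, hcast]
      have hsum2 : ∑ ℓ ∈ Finset.range (r-m₀), a r m₀ ℓ * (ℓ.choose j : ℚ)
          = a r m₀ j := by
        rw [Finset.sum_eq_single_of_mem j (Finset.mem_range.2 (by omega))]
        · rw [Nat.choose_self]; norm_num
        · intro b hb hbj
          rw [Finset.mem_range] at hb
          rw [Nat.choose_eq_zero_of_lt (by omega)]; norm_num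
      rw [hsum1, hsum2] at hc
      linarith [hc]
    · -- the polynomial identity in n, coefficient j, as a poly identity in t
      intro t ht
      set q : ℚ[X] := (∑ m ∈ Finset.range (r+1), ∑ ℓ ∈ Finset.range (r+1-m),
          C (a (r+1) m ℓ * (t:ℚ)^m) * ((X+1)^ℓ - X^ℓ))
        - ∑ m ∈ Finset.range r, ∑ ℓ ∈ Finset.range (r-m),
          C (a r m ℓ * (t:ℚ)^m) * (X+1)^ℓ with hqdef
      have hq : q = 0 := by
        apply zero_of_eval_nat q t
        intro n hn
        rw [hqdef]
        simp only [eval_sub, eval_finset_sum, eval_mul, eval_C, eval_pow, eval_add,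
          eval_X, eval_one]
        have h0 := L2 t n ht hn
        have conv1 : ∀ (b : ℕ → ℕ → ℚ) (M : ℕ) (f : ℕ → ℕ) (g : ℕ → ℕ → ℚ),
            ∑ m ∈ Finset.range M, ∑ ℓ ∈ Finset.range (f m),
              (b m ℓ * (t:ℚ)^m) * g m ℓ
            = ∑ m ∈ Finset.range M, ∑ ℓ ∈ Finset.range (f m),
              b m ℓ * (t:ℚ)^m * g m ℓ := by
          intro b M f g
          refine Finset.sum_congr rfl fun m _ => Finset.sum_congr rfl fun ℓ _ => by ring
        rw [conv1, conv1]
        exact h0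
      have h2 := congrArg (fun p => p.coeff j) hq
      simp only [hqdef, coeff_sub, finset_sum_coeff, coeff_C_mul,
        coeff_X_add_one_pow, coeff_X_pow, coeff_zero] at h2
      -- now rearrange the goal into the shape of h2
      have g1 : ∀ m ∈ Finset.range (r+1),
          ((∑ ℓ ∈ Finset.range (r+1-m),
            a (r+1) m ℓ * ((ℓ.choose j : ℚ) - if j = ℓ then 1 else 0))
          - (if m < r then ∑ ℓ ∈ Finset.range (r-m), a r m ℓ * (ℓ.choose j : ℚ) else 0))
            * (t:ℚ)^m
          = (∑ ℓ ∈ Finset.range (r+1-m),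
              a (r+1) m ℓ * (t:ℚ)^m * ((ℓ.choose j : ℚ) - if j = ℓ then 1 else 0))
          - (if m < r then ∑ ℓ ∈ Finset.range (r-m),
              a r m ℓ * (t:ℚ)^m * (ℓ.choose j : ℚ) else 0) := by
        intro m _
        rw [sub_mul, Finset.sum_mul]
        congr 1
        · exact Finset.sum_congr rfl fun ℓ _ => by ring
        · split
          · rw [Finset.sum_mul]; exact Finset.sum_congr rfl fun ℓ _ => by ring
          · rw [zero_mul]
      rw [Finset.sum_congr rfl g1, Finset.sum_sub_distrib]
      have g2 : ∑ m ∈ Finset.range (r+1),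
          (if m < r then ∑ ℓ ∈ Finset.range (r-m),
            a r m ℓ * (t:ℚ)^m * (ℓ.choose j : ℚ) else 0)
          = ∑ m ∈ Finset.range r, ∑ ℓ ∈ Finset.range (r-m),
            a r m ℓ * (t:ℚ)^m * (ℓ.choose j : ℚ) := by
        rw [Finset.sum_range_succ, if_neg (lt_irrefl r), add_zero]
        exact Finset.sum_congr rfl fun m hm => if_pos (Finset.mem_range.1 hm)
      rw [g2]
      have g3 : ∀ m ∈ Finset.range (r+1),
          ∑ ℓ ∈ Finset.range (r+1-m),
            a (r+1) m ℓ * (t:ℚ)^m * ((ℓ.choose j : ℚ) - if j = ℓ then 1 else 0)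
          = ∑ ℓ ∈ Finset.range (r+1-m),
            a (r+1) m ℓ * (t:ℚ)^m * ((ℓ.choose j : ℚ) - if j = ℓ then 1 else 0) := by
        intro m _; rfl
      -- match with h2
      convert h2 using 2 <;>
        refine Finset.sum_congr rfl fun m _ => Finset.sum_congr rfl fun ℓ _ => by ring
  -- Step 3: diagonal identity
  have diag : ∑ m ∈ Finset.range (r+1), a (r+1) m (r-m) = 0 := by
    set p2 : ℚ[X] := (∑ m ∈ Finset.range (r+1), ∑ ℓ ∈ Finset.range (r+1-m),
        C (a (r+1) m ℓ) * X^(ℓ+m))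
      - ∑ m ∈ Finset.range r, ∑ ℓ ∈ Finset.range (r-m), C (a r m ℓ) * X^(ℓ+m)
      with hp2
    have hzero : p2 = 0 := by
      apply zero_of_eval_nat p2 1
      intro t ht
      rw [hp2]
      simp only [eval_sub, eval_finset_sum, eval_mul, eval_C, eval_pow, eval_X]
      have e1 := hB t t ht le_rfl
      have e2 := hA t t ht le_rfl
      have e3 := Tsum_diag r hr t
      rw [e1, e2] at e3
      have conv1 : ∀ (b : ℕ → ℕ → ℚ) (M : ℕ) (f : ℕ → ℕ),
          ∑ m ∈ Finset.range M, ∑ ℓ ∈ Finset.range (f m), b m ℓ * (t:ℚ)^(ℓ+m)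
          = ∑ m ∈ Finset.range M, ∑ ℓ ∈ Finset.range (f m),
            b m ℓ * (t:ℚ)^ℓ * (t:ℚ)^m := by
        intro b M f
        refine Finset.sum_congr rfl fun m _ => Finset.sum_congr rfl fun ℓ _ => by
          rw [pow_add]; ring
      rw [conv1, conv1]
      linarith [e3]
    have h2 := congrArg (fun p => p.coeff r) hzero
    simp only [hp2, coeff_sub, finset_sum_coeff, coeff_C_mul, coeff_X_pow, coeff_zero,
      mul_ite, mul_one, mul_zero] at h2
    have hB' : ∀ m ∈ Finset.range (r+1),
        (∑ ℓ ∈ Finset.range (r+1-m), if r = ℓ+m then a (r+1) m ℓ else 0)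
        = a (r+1) m (r-m) := by
      intro m hm
      rw [Finset.mem_range] at hm
      rw [Finset.sum_eq_single_of_mem (r-m) (Finset.mem_range.2 (by omega))]
      · rw [if_pos (by omega)]
      · intro b hb hbne
        rw [Finset.mem_range] at hb
        exact if_neg (by omega)
    have hA' : ∑ m ∈ Finset.range r, ∑ ℓ ∈ Finset.range (r-m),
        (if r = ℓ+m then a r m ℓ else 0) = 0 := by
      refine Finset.sum_eq_zero fun m hm => Finset.sum_eq_zero fun ℓ hℓ => ?_
      rw [Finset.mem_range] at hm hℓ
      exact if_neg (by omega)
    rw [Finset.sum_congr rfl hB', hA', sub_zero] at h2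
    exact h2
  -- Step 4: conclude
  rw [Finset.sum_range_succ, Nat.sub_self] at diag
  have final : ∑ m ∈ Finset.range r, a (r+1) m (r-m)
      = ∑ m ∈ Finset.range r, a r m (r-m-1) / ((r:ℚ) - m) := by
    refine Finset.sum_congr rfl fun m hm => ?_
    rw [Finset.mem_range] at hm
    have hk := key m hm
    have hne : (r:ℚ) - (m:ℚ) ≠ 0 := by
      have : (m:ℚ) < (r:ℚ) := by exact_mod_cast hm
      linarith
    field_simp
    linarith [hk]
  rw [final] at diag
  linarith [diag]
end
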